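/- arXiv:2207.09452 — 2 statements merged into one kernel-verified Lean document; each statement's English description precedes it below -/
import Mathlib

section
/- Let f_n be the solutions of the integral-difference equation: f₁(s) = (3 − s)/s for 1 ≤ s ≤ 3 and f₁(s) = 0 for s > 3; for n ≥ 2, if n is even and s ≥ 2, or n is odd and s ≥ 3, then s·f_n(s) = ∫_s^∞ f_{n−1}(t−1) dt; if n is odd and 1 ≤ s ≤ 3, then s·f_n(s) = 3·f_n(3) = ∫_3^∞ f_{n−1}(t−1) dt. Then for every n ≥ 1, f_n(s) ≤ 2e²·(0.9214)^{n−1}·h(s), valid for all s ≥ 1 when n is odd and for all s ≥ 2 when n is even. -/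
open Real

/-- The function `h(s)`: `e⁻²` for `1 ≤ s ≤ 2`, `e⁻ˢ` for `2 ≤ s ≤ 3`,
and `3 s⁻¹ e⁻ˢ` for `s ≥ 3`. -/
noncomputable def hfun (s : ℝ) : ℝ :=
  if s ≤ 2 then Real.exp (-2) else if s ≤ 3 then Real.exp (-s) else 3 / s * Real.exp (-s)

open MeasureTheory Set Filter


noncomputable def P6 (t : ℝ) : ℝ := 1-t+t^2/2-t^3/6+t^4/24-t^5/120-t^6/360

lemma exp_neg_lb {t : ℝ} (h0 : 0 ≤ t) (h1 : t ≤ 1) : P6 t ≤ exp (-t) := by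
  have hx : |(-t)| ≤ 1 := by rw [abs_neg, abs_of_nonneg h0]; exact h1
  have h := Real.exp_bound hx (n := 6) (by norm_num)
  have h' := (abs_sub_le_iff.1 h).2
  have hs : ∑ m ∈ Finset.range 6, (-t) ^ m / m.factorial
      = 1 - t + t^2/2 - t^3/6 + t^4/24 - t^5/120 := by
    simp [Finset.sum_range_succ, Nat.factorial]; ring
  rw [hs] at h'
  have habs : |(-t)| ^ 6 * (((6:ℕ).succ : ℝ) / ((6:ℕ).factorial * 6)) ≤ t^6/360 := by
    rw [abs_neg, abs_of_nonneg h0]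
    have : ((6:ℕ).succ : ℝ) / ((6:ℕ).factorial * 6) = 7/4320 := by norm_num [Nat.factorial]
    rw [this]; nlinarith [pow_nonneg h0 6]
  unfold P6; nlinarith [h', habs]

lemma P6_nonneg {t : ℝ} (h0 : 0 ≤ t) (h1 : t ≤ 1) : 0 ≤ P6 t := by
  unfold P6
  nlinarith [pow_nonneg h0 3, pow_nonneg h0 4, pow_nonneg h0 5, pow_nonneg h0 6, sq_nonneg t, mul_nonneg h0 (sub_nonneg.2 h1)]

lemma exp_neg_ub {t : ℝ} (h0 : 0 ≤ t) (h1 : t ≤ 1) :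
    exp (-t) ≤ 1 - t + t^2/2 - t^3/6 + t^4/24 + t^5/100 := by
  have hx : |(-t)| ≤ 1 := by rw [abs_neg, abs_of_nonneg h0]; exact h1
  have h := Real.exp_bound hx (n := 5) (by norm_num)
  have h' := (abs_sub_le_iff.1 h).1
  have hs : ∑ m ∈ Finset.range 5, (-t) ^ m / m.factorial
      = 1 - t + t^2/2 - t^3/6 + t^4/24 := by
    simp [Finset.sum_range_succ, Nat.factorial]; ring
  rw [hs] at h'
  have habs : |(-t)| ^ 5 * (((5:ℕ).succ : ℝ) / ((5:ℕ).factorial * 5)) ≤ t^5/100 := by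
    rw [abs_neg, abs_of_nonneg h0]
    have : ((5:ℕ).succ : ℝ) / ((5:ℕ).factorial * 5) = 1/100 := by norm_num [Nat.factorial]
    rw [this]; linarith
  nlinarith [h', habs]

lemma poly1 {t : ℝ} (h0 : 0 ≤ t) (h1 : t ≤ 1) :
    (0.1931471808 + 0.75*0.3678794418)*(1+t) + 1 ≤ 0.9214*(2+t)*(1+t)*P6 t := by
  unfold P6
  nlinarith [sq_nonneg t, sq_nonneg (1-t), pow_nonneg h0 3, pow_nonneg h0 4, pow_nonneg h0 5, pow_nonneg h0 6, pow_nonneg h0 7, pow_nonneg h0 8, sq_nonneg (t*(1-t)), mul_nonneg h0 (sub_nonneg.2 h1)]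

lemma poly2 {t : ℝ} (h0 : 0 ≤ t) (h1 : t ≤ 1) :
    2.7182818286*(1-t) + 0.75*(2+t) ≤ 0.9214*(3+t)*(2+t)*(P6 t*(1-t/3)) := by
  unfold P6
  nlinarith [sq_nonneg t, sq_nonneg (1-t), pow_nonneg h0 3, pow_nonneg h0 4, pow_nonneg h0 5, pow_nonneg h0 6, pow_nonneg h0 7, pow_nonneg h0 8, sq_nonneg (t*(1-t)), mul_nonneg h0 (sub_nonneg.2 h1)]

lemma poly4 {t : ℝ} (h0 : 0 ≤ t) (h1 : t ≤ 1) :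
    2.7182818286*(1-t+t^2/2-t^3/6+t^4/24+t^5/100) - 0.25 ≤ 0.9214*(3+t)*(P6 t*(1-t/3)) := by
  unfold P6
  nlinarith [sq_nonneg t, sq_nonneg (1-t), pow_nonneg h0 3, pow_nonneg h0 4, pow_nonneg h0 5, pow_nonneg h0 6, pow_nonneg h0 7, pow_nonneg h0 8, sq_nonneg (t*(1-t)), mul_nonneg h0 (sub_nonneg.2 h1)]

lemma log3_ub : Real.log 3 ≤ 1.1931471808 := by
  have h : (3:ℝ) = 2 * (3/2) := by norm_num
  rw [h, Real.log_mul (by norm_num) (by norm_num)]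
  have h1 : Real.log 2 < 0.6931471808 := Real.log_two_lt_d9
  have h2 : Real.log (3/2) ≤ 3/2 - 1 := Real.log_le_sub_one_of_pos (by norm_num)
  linarith

lemma log_lb {x : ℝ} (hx : 0 < x) : 1 - 1/x ≤ Real.log x := by
  have h := Real.log_le_sub_one_of_pos (show (0:ℝ) < 1/x by positivity)
  rw [Real.log_div one_ne_zero (ne_of_gt hx), Real.log_one] at h
  linarith

lemma L1 {s : ℝ} (h2 : 2 ≤ s) (h3 : s ≤ 3) :
    exp (-2) * (Real.log 3 - Real.log (s-1)) + 3/4 * exp (-3) ≤ 0.9214 * s * exp (-s) := by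
  have h0 : (0:ℝ) ≤ s - 2 := by linarith
  have h1 : s - 2 ≤ 1 := by linarith
  have hp : (0:ℝ) < s - 1 := by linarith
  have hlogs := log_lb hp
  have he1 : exp (-1) ≤ 0.3678794418 := by
    have h := Real.exp_one_gt_d9
    have hid : exp (-1) * exp 1 = 1 := by rw [← Real.exp_add]; norm_num
    nlinarith [Real.exp_pos (-1)]
  have hP := exp_neg_lb h0 h1
  have hes : exp (-s) = exp (-2) * exp (-(s-2)) := by rw [← Real.exp_add]; ring_nf
  have he3 : exp (-3) = exp (-2) * exp (-1) := by rw [← Real.exp_add]; norm_num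
  have hpos2 : (0:ℝ) < exp (-2) := Real.exp_pos _
  have key := poly1 h0 h1
  -- divide key by (s-1) = 1+(s-2)
  have hdiv : (0.1931471808 + 1/(s-1)) + 0.75*0.3678794418 ≤ 0.9214*s*P6 (s-2) := by
    rw [show (0.1931471808 + 1/(s-1)) + 0.75*0.3678794418
        = ((0.1931471808 + 0.75*0.3678794418)*(1+(s-2)) + 1)/(s-1) by field_simp; ring]
    rw [div_le_iff₀ hp]
    calc (0.1931471808 + 0.75*0.3678794418)*(1+(s-2)) + 1
        ≤ 0.9214*(2+(s-2))*(1+(s-2))*P6 (s-2) := key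
      _ = 0.9214*s*P6 (s-2)*(s-1) := by ring
  have hlog : Real.log 3 - Real.log (s-1) ≤ 0.1931471808 + 1/(s-1) := by
    have := log3_ub; linarith
  have hPe : 0.9214*s*P6 (s-2) ≤ 0.9214*s*exp (-(s-2)) := by nlinarith
  rw [hes, he3]
  calc exp (-2) * (Real.log 3 - Real.log (s-1)) + 3/4 * (exp (-2) * exp (-1))
      ≤ exp (-2) * ((0.1931471808 + 1/(s-1)) + 0.75*0.3678794418) := by nlinarith
    _ ≤ exp (-2) * (0.9214*s*exp (-(s-2))) := by nlinarith [le_trans hdiv hPe]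
    _ = 0.9214 * s * (exp (-2) * exp (-(s-2))) := by ring

lemma L2 {s : ℝ} (h3 : 3 ≤ s) (h4 : s ≤ 4) :
    exp (-2) * (Real.log 3 - Real.log (s-1)) + 3/4 * exp (-3) ≤ 0.9214 * s * exp (1 - 4*s/3) := by
  have h0 : (0:ℝ) ≤ s - 3 := by linarith
  have h1 : s - 3 ≤ 1 := by linarith
  have hp : (0:ℝ) < s - 1 := by linarith
  have he : exp 1 < 2.7182818286 := Real.exp_one_lt_d9
  have hloga : Real.log 3 - Real.log (s-1) ≤ (4-s)/(s-1) := by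
    have h := Real.log_le_sub_one_of_pos (show (0:ℝ) < 3/(s-1) by positivity)
    rw [Real.log_div (by norm_num) (ne_of_gt hp)] at h
    have : (3:ℝ)/(s-1) - 1 = (4-s)/(s-1) := by field_simp; ring
    linarith [this ▸ h]
  have hlognn : (0:ℝ) ≤ (4-s)/(s-1) := by
    apply div_nonneg <;> linarith
  have hP := exp_neg_lb h0 h1
  have hPn := P6_nonneg h0 h1
  have hq := Real.add_one_le_exp (-(s-3)/3)
  have hid : exp (1 - 4*s/3) = exp (-3) * (exp (-(s-3)) * exp (-(s-3)/3)) := by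
    rw [← Real.exp_add, ← Real.exp_add]; ring_nf
  have hid2 : exp (-2) = exp (-3) * exp 1 := by rw [← Real.exp_add]; norm_num
  have hpos3 : (0:ℝ) < exp (-3) := Real.exp_pos _
  have hprod : P6 (s-3) * (1-(s-3)/3) ≤ exp (-(s-3)) * exp (-(s-3)/3) := by
    have hb : (0:ℝ) < exp (-(s-3)/3) := Real.exp_pos _
    have hq' : 1-(s-3)/3 ≤ exp (-(s-3)/3) := by linarith
    nlinarith [Real.exp_pos (-(s-3))]
  have key := poly2 h0 h1
  -- divide by (s-1) = 2+(s-3)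
  have hdiv : 2.7182818286*((4-s)/(s-1)) + 3/4 ≤ 0.9214*s*(P6 (s-3)*(1-(s-3)/3)) := by
    rw [show 2.7182818286*((4-s)/(s-1)) + 3/4 = (2.7182818286*(1-(s-3)) + 0.75*(2+(s-3)))/(s-1) by field_simp; ring]
    rw [div_le_iff₀ hp]
    calc 2.7182818286*(1-(s-3)) + 0.75*(2+(s-3))
        ≤ 0.9214*(3+(s-3))*(2+(s-3))*(P6 (s-3)*(1-(s-3)/3)) := key
      _ = 0.9214*s*(P6 (s-3)*(1-(s-3)/3))*(s-1) := by ring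
  have hlhs : exp 1 * (Real.log 3 - Real.log (s-1)) + 3/4 ≤ 2.7182818286*((4-s)/(s-1)) + 3/4 := by
    have h1e : exp 1 * (Real.log 3 - Real.log (s-1)) ≤ exp 1 * ((4-s)/(s-1)) :=
      mul_le_mul_of_nonneg_left hloga (le_of_lt (Real.exp_pos 1))
    nlinarith
  rw [hid, hid2]
  calc exp (-3) * exp 1 * (Real.log 3 - Real.log (s-1)) + 3/4 * exp (-3)
      = exp (-3) * (exp 1 * (Real.log 3 - Real.log (s-1)) + 3/4) := by ring
    _ ≤ exp (-3) * (0.9214*s*(P6 (s-3)*(1-(s-3)/3))) := by nlinarith [le_trans hlhs hdiv]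
    _ ≤ exp (-3) * (0.9214*s*(exp (-(s-3)) * exp (-(s-3)/3))) := by
        have hs0 : (0:ℝ) ≤ 0.9214*s := by nlinarith
        exact mul_le_mul_of_nonneg_left (mul_le_mul_of_nonneg_left hprod hs0) hpos3.le
    _ = 0.9214 * s * (exp (-3) * (exp (-(s-3)) * exp (-(s-3)/3))) := by ring

lemma L4 {s : ℝ} (h3 : 3 ≤ s) (h4 : s ≤ 4) :
    exp (-(s-1)) - 1/4 * exp (-3) ≤ 0.9214 * s * exp (1 - 4*s/3) := by
  have h0 : (0:ℝ) ≤ s - 3 := by linarith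
  have h1 : s - 3 ≤ 1 := by linarith
  have he : exp 1 < 2.7182818286 := Real.exp_one_lt_d9
  have hub := exp_neg_ub h0 h1
  have hP := exp_neg_lb h0 h1
  have hPn := P6_nonneg h0 h1
  have hid : exp (1 - 4*s/3) = exp (-3) * (exp (-(s-3)) * exp (-(s-3)/3)) := by
    rw [← Real.exp_add, ← Real.exp_add]; ring_nf
  have hid2 : exp (-(s-1)) = exp (-3) * (exp 1 * exp (-(s-3))) := by
    rw [← Real.exp_add, ← Real.exp_add]; ring_nf
  have hpos3 : (0:ℝ) < exp (-3) := Real.exp_pos _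
  have hprod : P6 (s-3) * (1-(s-3)/3) ≤ exp (-(s-3)) * exp (-(s-3)/3) := by
    have hq := Real.add_one_le_exp (-(s-3)/3)
    have hq' : 1-(s-3)/3 ≤ exp (-(s-3)/3) := by linarith
    nlinarith [Real.exp_pos (-(s-3))]
  have key := poly4 h0 h1
  have hexp_ub : exp 1 * exp (-(s-3)) ≤
      2.7182818286*(1-(s-3)+(s-3)^2/2-(s-3)^3/6+(s-3)^4/24+(s-3)^5/100) := by
    have hnn : (0:ℝ) < exp (-(s-3)) := Real.exp_pos _
    nlinarith
  rw [hid, hid2]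
  calc exp (-3) * (exp 1 * exp (-(s-3))) - 1/4 * exp (-3)
      = exp (-3) * (exp 1 * exp (-(s-3)) - 0.25) := by ring
    _ ≤ exp (-3) * (0.9214*(3+(s-3))*(P6 (s-3)*(1-(s-3)/3))) := by nlinarith [le_trans (by linarith : exp 1 * exp (-(s-3)) - 0.25 ≤ 2.7182818286*(1-(s-3)+(s-3)^2/2-(s-3)^3/6+(s-3)^4/24+(s-3)^5/100) - 0.25) key]
    _ ≤ exp (-3) * (0.9214*s*(exp (-(s-3)) * exp (-(s-3)/3))) := by
        have hs0 : (0:ℝ) ≤ 0.9214*s := by nlinarith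
        calc exp (-3) * (0.9214*(3+(s-3))*(P6 (s-3)*(1-(s-3)/3)))
            = exp (-3) * (0.9214*s*(P6 (s-3)*(1-(s-3)/3))) := by ring
          _ ≤ exp (-3) * (0.9214*s*(exp (-(s-3)) * exp (-(s-3)/3))) :=
              mul_le_mul_of_nonneg_left (mul_le_mul_of_nonneg_left hprod hs0) hpos3.le
    _ = 0.9214 * s * (exp (-3) * (exp (-(s-3)) * exp (-(s-3)/3))) := by ring

-- L5
lemma L5 : exp (-2) - 1/4 * exp (-3) ≤ 0.9214 * exp (-2) := by
  have h3 : exp (-3) = exp (-2) * exp (-1) := by rw [← Real.exp_add]; norm_num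
  have he : exp 1 < 2.7182818286 := Real.exp_one_lt_d9
  have he2 : (0:ℝ) < exp (-2) := Real.exp_pos _
  have h1 : exp (-1) = (exp 1)⁻¹ := by rw [← Real.exp_neg]
  have hpos : (0:ℝ) < exp 1 := Real.exp_pos _
  have : (0.3144 : ℝ) ≤ exp (-1) := by
    rw [h1]
    have hid : (exp 1)⁻¹ * exp 1 = 1 := inv_mul_cancel₀ (ne_of_gt hpos)
    nlinarith [inv_pos.mpr hpos]
  nlinarith

-- L7 : for 2 ≤ s ≤ 3, exp (-2) / s ≤ exp (-s)
lemma L7 {s : ℝ} (h2 : 2 ≤ s) (h3 : s ≤ 3) : exp (-2) / s ≤ exp (-s) := by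
  have key : exp (s - 2) ≤ s := by
    have hb : 4 - s ≤ exp (3 - s) := by
      have := Real.add_one_le_exp (3 - s); linarith
    have he : exp 1 < 2.7182818286 := Real.exp_one_lt_d9
    have hp : (0:ℝ) < exp (3 - s) := Real.exp_pos _
    have hid : exp (s - 2) * exp (3 - s) = exp 1 := by rw [← Real.exp_add]; norm_num
    nlinarith [Real.exp_pos (s-2)]
  have hs : (0:ℝ) < s := by linarith
  rw [div_le_iff₀ hs]
  have hid : exp (-2) = exp (-s) * exp (s - 2) := by rw [← Real.exp_add]; ring_nf
  rw [hid]
  have := Real.exp_pos (-s)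
  nlinarith

-- L6 : 3 ≤ s → exp (1 - 4*s/3) ≤ 3/s * exp (-s)
lemma L6 {s : ℝ} (h3 : 3 ≤ s) : exp (1 - 4*s/3) ≤ 3/s * exp (-s) := by
  have key : s ≤ 3 * exp ((s-3)/3) := by
    have := Real.add_one_le_exp ((s-3)/3); nlinarith
  have hs : (0:ℝ) < s := by linarith
  have hid : exp (1 - 4*s/3) * exp ((s-3)/3) = exp (-s) := by rw [← Real.exp_add]; ring_nf
  have hp := Real.exp_pos ((s-3)/3)
  have hq := Real.exp_pos (1 - 4*s/3)
  rw [div_mul_eq_mul_div, le_div_iff₀ hs]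
  calc exp (1 - 4*s/3) * s ≤ exp (1 - 4*s/3) * (3 * exp ((s-3)/3)) := by nlinarith
    _ = 3 * exp (-s) := by rw [← hid]; ring

-- L3 : 4 ≤ s → 3/4 * exp (1 - 4*(s-1)/3) ≤ 0.9214 * s * exp (1 - 4*s/3)
lemma L3 {s : ℝ} (h4 : 4 ≤ s) : 3/4 * exp (1 - 4*(s-1)/3) ≤ 0.9214 * s * exp (1 - 4*s/3) := by
  have hid : exp (1 - 4*(s-1)/3) = exp (1 - 4*s/3) * exp (4/3) := by rw [← Real.exp_add]; ring_nf
  have hcube : exp (4/3) ≤ 3.8 := by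
    have h : exp (4/3) ^ 3 = exp 4 := by rw [← Real.exp_nat_mul]; norm_num
    have he : exp 1 < 2.7182818286 := Real.exp_one_lt_d9
    have h4e : exp 4 = (exp 1)^4 := by rw [← Real.exp_nat_mul]; norm_num
    have hp : (0:ℝ) < exp (4/3) := Real.exp_pos _
    have hp1 : (0:ℝ) < exp 1 := Real.exp_pos _
    have hsq : exp 1 ^ 2 < 2.7182818286^2 := by nlinarith
    have h45 : exp 4 < 54.87 := by nlinarith [sq_nonneg (exp 1 ^ 2), pow_pos hp1 2]
    by_contra hc
    push_neg at hc
    have := pow_lt_pow_left₀ (show (3.8:ℝ) < exp (4/3) from hc) (by norm_num) (n := 3) (by norm_num)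
    nlinarith
  have hp := Real.exp_pos (1 - 4*s/3)
  rw [hid]
  nlinarith


lemma gInt (c a : ℝ) : IntegrableOn (fun u : ℝ => exp (c - 4*u/3)) (Ioi a) := by
  have h : ∀ u : ℝ, exp (c - 4*u/3) = exp c * exp (-(4/3) * u) := by
    intro u; rw [← Real.exp_add]; ring_nf
  simp only [h]
  exact (exp_neg_integrableOn_Ioi a (by norm_num)).const_mul _

lemma gTend (c : ℝ) : Tendsto (fun u : ℝ => -(3/4) * exp (c - 4*u/3)) atTop (nhds 0) := by
  have h1 : Tendsto (fun u : ℝ => c - 4*u/3) atTop atBot := by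
    apply tendsto_atBot_add_const_left atTop c
    have : Tendsto (fun u : ℝ => -(4/3) * u) atTop atBot :=
      Tendsto.const_mul_atTop_of_neg (by norm_num) tendsto_id
    convert this using 2 with u; ring
  have := (Real.tendsto_exp_atBot.comp h1).const_mul (-(3/4) : ℝ)
  simpa using this

lemma gVal (c a : ℝ) : ∫ u in Ioi a, exp (c - 4*u/3) = 3/4 * exp (c - 4*a/3) := by
  have := integral_Ioi_of_hasDerivAt_of_tendsto' (f := fun u : ℝ => -(3/4) * exp (c - 4*u/3))
    (f' := fun u : ℝ => exp (c - 4*u/3)) (a := a) (m := 0) ?_ (gInt c a) (gTend c)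
  · rw [this]; ring
  · intro x _
    have h1 : HasDerivAt (fun u : ℝ => c - 4*u/3) (-(4/3)) x := by
      simpa using ((hasDerivAt_id x).const_mul (4:ℝ)).div_const (3) |>.const_sub c
    have := (h1.exp).const_mul (-(3/4) : ℝ)
    rw [show exp (c - 4*x/3) = -(3/4) * (exp (c - 4*x/3) * -(4/3)) by ring]; exact this

noncomputable def Mo (t : ℝ) : ℝ := if t ≤ 4 then exp (-2) / (t-1) else exp (1 - 4*(t-1)/3)
noncomputable def Me (t : ℝ) : ℝ := if t ≤ 4 then exp (-(t-1)) else exp (1 - 4*(t-1)/3)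

lemma tail_eq : ∀ t : ℝ, exp (1 - 4*(t-1)/3) = exp (7/3 - 4*t/3) := by
  intro t; congr 1; ring

lemma Mo_tail_congr {s : ℝ} (h : 4 ≤ s) : EqOn (fun t => exp (7/3 - 4*t/3)) Mo (Ioi s) := by
  intro t ht
  simp only [Mo, if_neg (not_le.2 (lt_of_le_of_lt h ht)), tail_eq]

lemma Me_tail_congr {s : ℝ} (h : 4 ≤ s) : EqOn (fun t => exp (7/3 - 4*t/3)) Me (Ioi s) := by
  intro t ht
  simp only [Me, if_neg (not_le.2 (lt_of_le_of_lt h ht)), tail_eq]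

lemma Mo_mid_congr {s : ℝ} : EqOn (fun t => exp (-2) / (t-1)) Mo (Ioc s 4) := by
  intro t ht; simp only [Mo, if_pos ht.2]

lemma Me_mid_congr {s : ℝ} : EqOn (fun t => exp (-(t-1))) Me (Ioc s 4) := by
  intro t ht; simp only [Me, if_pos ht.2]

lemma Mo_int_mid {s : ℝ} (hs : 2 ≤ s) : IntegrableOn Mo (Ioc s 4) := by
  apply IntegrableOn.congr_fun _ Mo_mid_congr measurableSet_Ioc
  have hc : ContinuousOn (fun t : ℝ => exp (-2) / (t-1)) (Icc s 4) := by
    apply continuousOn_const.div (by fun_prop)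
    intro x hx
    have hx1 := hx.1
    have : (0:ℝ) < x - 1 := by linarith
    exact ne_of_gt this
  exact hc.integrableOn_Icc.mono_set Ioc_subset_Icc_self

lemma Me_int_mid {s : ℝ} : IntegrableOn Me (Ioc s 4) := by
  apply IntegrableOn.congr_fun _ Me_mid_congr measurableSet_Ioc
  exact (Continuous.integrableOn_Icc (by fun_prop)).mono_set Ioc_subset_Icc_self

lemma Mo_int_tail : IntegrableOn Mo (Ioi 4) := by
  apply IntegrableOn.congr_fun _ (Mo_tail_congr le_rfl) measurableSet_Ioi
  exact gInt (7/3) 4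

lemma Me_int_tail : IntegrableOn Me (Ioi 4) := by
  apply IntegrableOn.congr_fun _ (Me_tail_congr le_rfl) measurableSet_Ioi
  exact gInt (7/3) 4

lemma Mo_int {s : ℝ} (hs : 2 ≤ s) : IntegrableOn Mo (Ioi s) := by
  rcases le_or_gt s 4 with h | h
  · rw [← Ioc_union_Ioi_eq_Ioi h]
    exact (Mo_int_mid hs).union Mo_int_tail
  · apply IntegrableOn.congr_fun _ (Mo_tail_congr h.le) measurableSet_Ioi
    exact gInt (7/3) s

lemma Me_int {s : ℝ} (hs : 2 ≤ s) : IntegrableOn Me (Ioi s) := by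
  rcases le_or_gt s 4 with h | h
  · rw [← Ioc_union_Ioi_eq_Ioi h]
    exact Me_int_mid.union Me_int_tail
  · apply IntegrableOn.congr_fun _ (Me_tail_congr h.le) measurableSet_Ioi
    exact gInt (7/3) s

lemma Mo_val_mid {s : ℝ} (h2 : 2 ≤ s) (h4 : s ≤ 4) :
    ∫ t in Ioi s, Mo t = exp (-2) * (Real.log 3 - Real.log (s-1)) + 3/4 * exp (-3) := by
  have hp : (0:ℝ) < s - 1 := by linarith
  rw [← Ioc_union_Ioi_eq_Ioi h4,
    setIntegral_union (Ioc_disjoint_Ioi le_rfl) measurableSet_Ioi (Mo_int_mid h2) Mo_int_tail]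
  have h1 : ∫ t in Ioc s 4, Mo t = exp (-2) * (Real.log 3 - Real.log (s-1)) := by
    rw [← setIntegral_congr_fun measurableSet_Ioc Mo_mid_congr,
      ← intervalIntegral.integral_of_le h4]
    rw [intervalIntegral.integral_comp_sub_right (f := fun x => exp (-2) / x) 1]
    simp only [div_eq_mul_inv]
    rw [intervalIntegral.integral_const_mul]
    rw [integral_inv_of_pos hp (by norm_num : (0:ℝ) < 4 - 1)]
    rw [show (4:ℝ) - 1 = 3 by norm_num, Real.log_div (by norm_num) (ne_of_gt hp)]
  have h2' : ∫ t in Ioi (4:ℝ), Mo t = 3/4 * exp (-3) := by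
    rw [← setIntegral_congr_fun measurableSet_Ioi (Mo_tail_congr le_rfl), gVal]
    norm_num
  rw [h1, h2']

lemma Mo_val_tail {s : ℝ} (h4 : 4 ≤ s) :
    ∫ t in Ioi s, Mo t = 3/4 * exp (1 - 4*(s-1)/3) := by
  rw [← setIntegral_congr_fun measurableSet_Ioi (Mo_tail_congr h4), gVal, tail_eq]

lemma Me_val_mid {s : ℝ} (h2 : 2 ≤ s) (h4 : s ≤ 4) :
    ∫ t in Ioi s, Me t = exp (-(s-1)) - 1/4 * exp (-3) := by
  rw [← Ioc_union_Ioi_eq_Ioi h4,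
    setIntegral_union (Ioc_disjoint_Ioi le_rfl) measurableSet_Ioi Me_int_mid Me_int_tail]
  have h1 : ∫ t in Ioc s 4, Me t = exp (-(s-1)) - exp (-3) := by
    rw [← setIntegral_congr_fun measurableSet_Ioc Me_mid_congr,
      ← intervalIntegral.integral_of_le h4]
    rw [intervalIntegral.integral_comp_sub_right (f := fun x => exp (-x)) 1]
    rw [intervalIntegral.integral_comp_neg (fun x => exp x)]
    rw [integral_exp]
    norm_num
  have h2' : ∫ t in Ioi (4:ℝ), Me t = 3/4 * exp (-3) := by
    rw [← setIntegral_congr_fun measurableSet_Ioi (Me_tail_congr le_rfl), gVal]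
    norm_num
  rw [h1, h2']; ring

lemma Me_val_tail {s : ℝ} (h4 : 4 ≤ s) :
    ∫ t in Ioi s, Me t = 3/4 * exp (1 - 4*(s-1)/3) := by
  rw [← setIntegral_congr_fun measurableSet_Ioi (Me_tail_congr h4), gVal, tail_eq]



/-- Theorem 2.4: if `(f_n)` solves the integral–difference equation
(`f₁(s) = (3-s)/s` on `[1,3]`, `f₁ = 0` beyond `3`;
`s f_n(s) = ∫_s^∞ f_{n-1}(t-1) dt` for even `n ≥ 2` with `s ≥ 2` or odd `n ≥ 2` with
`s ≥ 3`; and `s f_n(s) = 3 f_n(3)` for odd `n ≥ 2` and `1 ≤ s ≤ 3`), then for every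
`n ≥ 1` one has `f_n(s) ≤ 2 e² (0.9214)^{n-1} h(s)`, for all `s ≥ 1` when `n` is odd
and all `s ≥ 2` when `n` is even. -/
theorem fseq_le_hfun (fseq : ℕ → ℝ → ℝ)
    (hf1a : ∀ s : ℝ, 1 ≤ s → s ≤ 3 → fseq 1 s = (3 - s) / s)
    (hf1b : ∀ s : ℝ, 3 < s → fseq 1 s = 0)
    (hfrec : ∀ n : ℕ, 2 ≤ n → ∀ s : ℝ, (Even n ∧ 2 ≤ s) ∨ (Odd n ∧ 3 ≤ s) →
      s * fseq n s = ∫ t in Set.Ioi s, fseq (n - 1) (t - 1))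
    (hfodd : ∀ n : ℕ, 2 ≤ n → Odd n → ∀ s : ℝ, 1 ≤ s → s ≤ 3 →
      s * fseq n s = 3 * fseq n 3) :
    ∀ n : ℕ, 1 ≤ n → ∀ s : ℝ, (Odd n ∧ 1 ≤ s) ∨ (Even n ∧ 2 ≤ s) →
      fseq n s ≤ 2 * Real.exp 2 * (0.9214 : ℝ) ^ (n - 1) * hfun s := by
  set K : ℕ → ℝ := fun n => 2 * Real.exp 2 * (0.9214 : ℝ) ^ (n - 1) with hK
  have hKpos : ∀ n, 0 < K n := fun n => by positivity
  have main : ∀ n : ℕ, 1 ≤ n →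
      (Odd n → (∀ s : ℝ, 1 ≤ s → s ≤ 3 → s * fseq n s ≤ exp (-2) * K n) ∧
               (∀ s : ℝ, 3 ≤ s → fseq n s ≤ K n * exp (1 - 4*s/3))) ∧
      (Even n → (∀ s : ℝ, 2 ≤ s → s ≤ 3 → fseq n s ≤ K n * exp (-s)) ∧
                (∀ s : ℝ, 3 ≤ s → fseq n s ≤ K n * exp (1 - 4*s/3))) := by
    intro n hn
    induction n, hn using Nat.le_induction with
    | base =>
      have hK1 : K 1 = 2 * Real.exp 2 := by simp [hK]
      constructor
      · intro _
        constructor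
        · intro s h1 h3
          rw [hf1a s h1 h3]
          have hs0 : s ≠ 0 := by intro h; rw [h] at h1; norm_num at h1
          rw [mul_div_cancel₀ _ hs0, hK1]
          have he : exp (-2) * exp 2 = 1 := by rw [← Real.exp_add]; norm_num
          nlinarith
        · intro s h3
          rcases eq_or_lt_of_le h3 with h | h
          · rw [← h, hf1a 3 (by norm_num) le_rfl]
            norm_num
            positivity
          · rw [hf1b s h]
            positivity
      · intro h
        exact absurd h (by decide)
    | succ n hn1 IH =>
      have hKq : K (n+1) = K n * 0.9214 := by
        have hpow : (0.9214:ℝ)^n = 0.9214^(n-1)*0.9214 := by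
          conv_lhs => rw [show n = n - 1 + 1 from by omega]
          exact pow_succ _ _
        simp only [hK, Nat.add_sub_cancel]
        rw [hpow]; ring
      constructor
      · -- n+1 odd, n even
        intro hodd
        have heven : Even n := Nat.not_odd_iff_even.mp (Nat.odd_add_one.mp hodd)
        have hn2 : 2 ≤ n := by
          rcases heven with ⟨k, hk⟩; omega
        have IHe := IH.2 heven
        have hpw : ∀ t : ℝ, 3 < t → fseq n (t-1) ≤ K n * Me t := by
          intro t ht
          unfold Me
          split_ifs with h
          · exact IHe.1 (t-1) (by linarith) (by linarith)
          · exact IHe.2 (t-1) (by push_neg at h; linarith)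
        have hbound : ∀ s : ℝ, 3 ≤ s → s * fseq (n+1) s ≤ K n * ∫ t in Set.Ioi s, Me t := by
          intro s hs
          have hrec := hfrec (n+1) (by omega) s (Or.inr ⟨hodd, hs⟩)
          simp only [Nat.add_sub_cancel] at hrec
          rw [hrec]
          have hMeint : IntegrableOn Me (Set.Ioi s) := Me_int (by linarith)
          by_cases hI : IntegrableOn (fun t => fseq n (t-1)) (Set.Ioi s) volume
          · calc ∫ t in Set.Ioi s, fseq n (t-1)
                ≤ ∫ t in Set.Ioi s, K n * Me t :=
                  setIntegral_mono_on hI (hMeint.const_mul _) measurableSet_Ioi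
                    (fun t ht => hpw t (lt_of_le_of_lt hs ht))
              _ = K n * ∫ t in Set.Ioi s, Me t := MeasureTheory.integral_const_mul _ _
          · rw [integral_undef hI]
            apply mul_nonneg (hKpos n).le
            apply setIntegral_nonneg measurableSet_Ioi
            intro t ht
            unfold Me
            split_ifs <;> positivity
        constructor
        · intro s h1 h3
          rw [hfodd (n+1) (by omega) hodd s h1 h3]
          have h33 := hbound 3 le_rfl
          rw [Me_val_mid (by norm_num) (by norm_num)] at h33
          have hL5 : exp (-(3-1:ℝ)) - 1/4 * exp (-3) ≤ 0.9214 * exp (-2) := by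
            rw [show -((3:ℝ)-1) = -2 by norm_num]
            exact L5
          calc 3 * fseq (n+1) 3 ≤ K n * (exp (-(3-1:ℝ)) - 1/4 * exp (-3)) := h33
            _ ≤ K n * (0.9214 * exp (-2)) :=
                mul_le_mul_of_nonneg_left hL5 (hKpos n).le
            _ = exp (-2) * K (n+1) := by rw [hKq]; ring
        · intro s h3
          have hs0 : (0:ℝ) < s := by linarith
          have hb := hbound s h3
          have hVle : (∫ t in Set.Ioi s, Me t) ≤ 0.9214 * s * exp (1 - 4*s/3) := by
            rcases le_or_gt s 4 with h4 | h4
            · rw [Me_val_mid (by linarith) h4]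
              exact L4 h3 h4
            · rw [Me_val_tail h4.le]
              exact L3 h4.le
          have : s * fseq (n+1) s ≤ s * (K (n+1) * exp (1 - 4*s/3)) := by
            calc s * fseq (n+1) s ≤ K n * ∫ t in Set.Ioi s, Me t := hb
              _ ≤ K n * (0.9214 * s * exp (1 - 4*s/3)) :=
                  mul_le_mul_of_nonneg_left hVle (hKpos n).le
              _ = s * (K (n+1) * exp (1 - 4*s/3)) := by rw [hKq]; ring
          exact (mul_le_mul_iff_right₀ hs0).mp this
      · -- n+1 even, n odd
        intro heven
        have hodd : Odd n := by
          rcases Nat.even_or_odd n with h | h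
          · exfalso
            rcases heven with ⟨k, hk⟩; rcases h with ⟨j, hj⟩; omega
          · exact h
        have IHo := IH.1 hodd
        have hpw : ∀ t : ℝ, 2 < t → fseq n (t-1) ≤ K n * Mo t := by
          intro t ht
          unfold Mo
          split_ifs with h
          · have ht1 : (0:ℝ) < t - 1 := by linarith
            have h2 := IHo.1 (t-1) (by linarith) (by linarith)
            rw [show K n * (exp (-2)/(t-1)) = (exp (-2) * K n)/(t-1) by ring,
              le_div_iff₀ ht1]
            nlinarith
          · exact IHo.2 (t-1) (by push_neg at h; linarith)
        have hbound : ∀ s : ℝ, 2 ≤ s → s * fseq (n+1) s ≤ K n * ∫ t in Set.Ioi s, Mo t := by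
          intro s hs
          have hrec := hfrec (n+1) (by omega) s (Or.inl ⟨heven, hs⟩)
          simp only [Nat.add_sub_cancel] at hrec
          rw [hrec]
          have hMoint : IntegrableOn Mo (Set.Ioi s) := Mo_int hs
          by_cases hI : IntegrableOn (fun t => fseq n (t-1)) (Set.Ioi s) volume
          · calc ∫ t in Set.Ioi s, fseq n (t-1)
                ≤ ∫ t in Set.Ioi s, K n * Mo t :=
                  setIntegral_mono_on hI (hMoint.const_mul _) measurableSet_Ioi
                    (fun t ht => hpw t (lt_of_le_of_lt hs ht))
              _ = K n * ∫ t in Set.Ioi s, Mo t := MeasureTheory.integral_const_mul _ _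
          · rw [integral_undef hI]
            apply mul_nonneg (hKpos n).le
            apply setIntegral_nonneg measurableSet_Ioi
            intro t ht
            have ht2 : 2 < t := lt_of_le_of_lt hs ht
            unfold Mo
            split_ifs with h
            · apply div_nonneg (Real.exp_pos _).le; linarith
            · positivity
        constructor
        · intro s h2 h3
          have hs0 : (0:ℝ) < s := by linarith
          have hb := hbound s h2
          rw [Mo_val_mid h2 (by linarith)] at hb
          have : s * fseq (n+1) s ≤ s * (K (n+1) * exp (-s)) := by
            calc s * fseq (n+1) s
                ≤ K n * (exp (-2) * (Real.log 3 - Real.log (s-1)) + 3/4 * exp (-3)) := hb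
              _ ≤ K n * (0.9214 * s * exp (-s)) :=
                  mul_le_mul_of_nonneg_left (L1 h2 h3) (hKpos n).le
              _ = s * (K (n+1) * exp (-s)) := by rw [hKq]; ring
          exact (mul_le_mul_iff_right₀ hs0).mp this
        · intro s h3
          have hs0 : (0:ℝ) < s := by linarith
          have hb := hbound s (by linarith)
          have hVle : (∫ t in Set.Ioi s, Mo t) ≤ 0.9214 * s * exp (1 - 4*s/3) := by
            rcases le_or_gt s 4 with h4 | h4
            · rw [Mo_val_mid (by linarith) h4]
              exact L2 h3 h4
            · rw [Mo_val_tail h4.le]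
              exact L3 h4.le
          have : s * fseq (n+1) s ≤ s * (K (n+1) * exp (1 - 4*s/3)) := by
            calc s * fseq (n+1) s ≤ K n * ∫ t in Set.Ioi s, Mo t := hb
              _ ≤ K n * (0.9214 * s * exp (1 - 4*s/3)) :=
                  mul_le_mul_of_nonneg_left hVle (hKpos n).le
              _ = s * (K (n+1) * exp (1 - 4*s/3)) := by rw [hKq]; ring
          exact (mul_le_mul_iff_right₀ hs0).mp this
  -- deduce the theorem from the invariant
  intro n hn s hcase
  rcases hcase with ⟨hodd, hs1⟩ | ⟨heven, hs2⟩
  · have IHo := (main n hn).1 hodd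
    unfold hfun
    split_ifs with h2 h3
    · -- 1 ≤ s ≤ 2 : hfun = exp (-2)
      have hb := IHo.1 s hs1 (by linarith)
      rcases le_or_gt (fseq n s) 0 with hf | hf
      · have : (0:ℝ) ≤ 2 * Real.exp 2 * (0.9214:ℝ) ^ (n-1) * exp (-2) := by positivity
        linarith
      · have : fseq n s ≤ s * fseq n s := by nlinarith
        calc fseq n s ≤ exp (-2) * K n := by linarith
          _ = 2 * Real.exp 2 * (0.9214:ℝ) ^ (n-1) * exp (-2) := by simp only [hK]; try ring
    · -- 2 < s ≤ 3 : hfun = exp (-s)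
      have hs0 : (0:ℝ) < s := by linarith
      have hb := IHo.1 s hs1 h3
      have hL7 := L7 (le_of_lt (not_le.mp h2)) h3
      have : fseq n s ≤ (exp (-2) * K n) / s := by
        rw [le_div_iff₀ hs0]; nlinarith
      calc fseq n s ≤ (exp (-2) * K n) / s := this
        _ = (exp (-2) / s) * K n := by ring
        _ ≤ exp (-s) * K n := mul_le_mul_of_nonneg_right hL7 (hKpos n).le
        _ = 2 * Real.exp 2 * (0.9214:ℝ) ^ (n-1) * exp (-s) := by simp only [hK]; try ring
    · -- 3 < s : hfun = 3/s * exp (-s)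
      have h3s : (3:ℝ) ≤ s := by linarith [not_le.mp h3]
      have hb := IHo.2 s h3s
      have hL6 := L6 h3s
      calc fseq n s ≤ K n * exp (1 - 4*s/3) := hb
        _ ≤ K n * (3/s * exp (-s)) := mul_le_mul_of_nonneg_left hL6 (hKpos n).le
        _ = 2 * Real.exp 2 * (0.9214:ℝ) ^ (n-1) * (3/s * exp (-s)) := by simp only [hK]; try ring
  · have IHe := (main n hn).2 heven
    unfold hfun
    split_ifs with h2 h3
    · -- s = 2
      have hs2' : s = 2 := le_antisymm h2 hs2
      subst hs2'
      have hb := IHe.1 2 le_rfl (by norm_num)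
      calc fseq n 2 ≤ K n * exp (-2) := hb
        _ = 2 * Real.exp 2 * (0.9214:ℝ) ^ (n-1) * exp (-2) := by simp only [hK]; try ring
    · -- 2 < s ≤ 3
      have hb := IHe.1 s hs2 h3
      calc fseq n s ≤ K n * exp (-s) := hb
        _ = 2 * Real.exp 2 * (0.9214:ℝ) ^ (n-1) * exp (-s) := by simp only [hK]; try ring
    · -- 3 < s
      have h3s : (3:ℝ) ≤ s := by linarith [not_le.mp h3]
      have hb := IHe.2 s h3s
      have hL6 := L6 h3s
      calc fseq n s ≤ K n * exp (1 - 4*s/3) := hb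
        _ ≤ K n * (3/s * exp (-s)) := mul_le_mul_of_nonneg_left hL6 (hKpos n).le
        _ = 2 * Real.exp 2 * (0.9214:ℝ) ^ (n-1) * (3/s * exp (-s)) := by simp only [hK]; try ring
end

section
/- Let H(s) = ∫_s^∞ h(t−1) dt for s ≥ 2, and let α = e²·H(2)/2. Then: (i) H(s) ≤ (e/3)·s·h(s) for all s ≥ 3; (ii) H(3) ≤ (e(2α−1)/3)·s·h(s) for all 2 ≤ s ≤ 3; (iii) H(3) ≤ (2α−1)·s·h(s) for all 1 ≤ s ≤ 2. -/
open Real MeasureTheory Set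

noncomputable def Hfun (s : ℝ) : ℝ := ∫ t in Set.Ioi s, hfun (t - 1)

lemma hfun_pos (s : ℝ) : 0 < hfun s := by
  unfold hfun
  split_ifs with h1 h2
  · exact exp_pos _
  · exact exp_pos _
  · have : (0:ℝ) < s := by linarith [not_le.mp h2]
    positivity

lemma hfun_meas : Measurable fun t : ℝ => hfun (t - 1) := by
  unfold hfun
  apply Measurable.ite (measurableSet_le (by fun_prop) measurable_const) measurable_const
  apply Measurable.ite (measurableSet_le (by fun_prop) measurable_const) (by fun_prop)
    (by fun_prop)

lemma hfun_le {t : ℝ} (ht : 3 ≤ t) : hfun (t - 1) ≤ Real.exp 1 * Real.exp (-t) := by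
  rw [← Real.exp_add]
  unfold hfun
  split_ifs with h1 h2
  · exact exp_le_exp.mpr (by linarith)
  · exact le_of_eq (by ring_nf)
  · have h3 : (3:ℝ) < t - 1 := not_le.mp h2
    calc 3 / (t-1) * Real.exp (-(t-1)) ≤ 1 * Real.exp (-(t-1)) := by
          apply mul_le_mul_of_nonneg_right _ (exp_pos _).le
          rw [div_le_one (by linarith)]; linarith
      _ ≤ Real.exp (1 + -t) := by rw [one_mul]; exact exp_le_exp.mpr (by linarith)

lemma hfun_le2 {t : ℝ} (ht : 2 ≤ t) : hfun (t - 1) ≤ Real.exp 2 * Real.exp (-t) := by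
  rcases le_or_gt 3 t with h | h
  · exact (hfun_le h).trans (mul_le_mul_of_nonneg_right
      (exp_le_exp.mpr (by norm_num)) (exp_pos _).le)
  · have h1 : t - 1 ≤ 2 := by linarith
    rw [hfun, if_pos h1, ← Real.exp_add]
    exact exp_le_exp.mpr (by linarith)

lemma hfun_integrable {s : ℝ} (hs : 2 ≤ s) :
    IntegrableOn (fun t => hfun (t - 1)) (Ioi s) := by
  have hexp : IntegrableOn (fun t : ℝ => Real.exp 2 * Real.exp (-t)) (Ioi s) := by
    have := (exp_neg_integrableOn_Ioi s (one_pos)).const_mul (Real.exp 2)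
    simp at this; exact this
  apply Integrable.mono' hexp (hfun_meas.aestronglyMeasurable.restrict)
  filter_upwards [ae_restrict_mem measurableSet_Ioi] with t ht
  rw [Real.norm_eq_abs, abs_of_pos (hfun_pos _)]
  exact hfun_le2 (hs.trans ht.le)

lemma Hfun_le {s : ℝ} (hs : 3 ≤ s) : Hfun s ≤ Real.exp 1 * Real.exp (-s) := by
  have hexp : IntegrableOn (fun t : ℝ => Real.exp 1 * Real.exp (-t)) (Ioi s) := by
    have := (exp_neg_integrableOn_Ioi s (one_pos)).const_mul (Real.exp 1)
    simp at this; exact this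
  have : Hfun s ≤ ∫ t in Ioi s, Real.exp 1 * Real.exp (-t) := by
    apply setIntegral_mono_on (hfun_integrable (by linarith)) hexp measurableSet_Ioi
    intro t ht
    exact hfun_le (hs.trans ht.le)
  rwa [integral_const_mul, integral_exp_neg_Ioi] at this

lemma Hfun3_pos : 0 < Hfun 3 := by
  rw [Hfun, setIntegral_pos_iff_support_of_nonneg_ae]
  · have hsupp : (Function.support fun t : ℝ => hfun (t - 1)) = Set.univ := by
      ext t; simp [Function.mem_support, (hfun_pos (t-1)).ne']
    rw [hsupp]
    simp [Real.volume_Ioi]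
  · filter_upwards with t using (hfun_pos _).le
  · exact hfun_integrable (by norm_num)

lemma Hfun2_eq : Hfun 2 = Real.exp (-2) + Hfun 3 := by
  have hunion : Ioc (2:ℝ) 3 ∪ Ioi 3 = Ioi 2 := Ioc_union_Ioi_eq_Ioi (by norm_num)
  have hdisj : Disjoint (Ioc (2:ℝ) 3) (Ioi 3) := by
    exact Set.disjoint_left.mpr fun a ha hb => absurd (mem_Ioi.mp hb) (not_lt.mpr ha.2)
  rw [Hfun, Hfun, ← hunion, setIntegral_union hdisj measurableSet_Ioi
    ((hfun_integrable le_rfl).mono_set Ioc_subset_Ioi_self)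
    ((hfun_integrable le_rfl).mono_set (Ioi_subset_Ioi (by norm_num)))]
  congr 1
  rw [setIntegral_congr_fun measurableSet_Ioc
    (g := fun _ => Real.exp (-2)) (fun t ht => by rw [hfun, if_pos (by linarith [ht.2])]),
    setIntegral_const, measureReal_def, Real.volume_Ioc]
  norm_num

/-- Lemma 2.5: with `α = e² H(2) / 2`, we have `H(s) ≤ (e/3) s h(s)` for `s ≥ 3`,
`H(3) ≤ (e (2α - 1) / 3) s h(s)` for `2 ≤ s ≤ 3`, and `H(3) ≤ (2α - 1) s h(s)` for
`1 ≤ s ≤ 2`. -/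
theorem Hfun_bounds :
    (∀ s : ℝ, 3 ≤ s → Hfun s ≤ Real.exp 1 / 3 * s * hfun s) ∧
    (∀ s : ℝ, 2 ≤ s → s ≤ 3 →
      Hfun 3 ≤ Real.exp 1 * (2 * (Real.exp 2 * Hfun 2 / 2) - 1) / 3 * s * hfun s) ∧
    (∀ s : ℝ, 1 ≤ s → s ≤ 2 →
      Hfun 3 ≤ (2 * (Real.exp 2 * Hfun 2 / 2) - 1) * s * hfun s) := by
  have he2 : Real.exp 2 * Real.exp (-2) = 1 := by
    rw [← Real.exp_add]; norm_num
  have halpha : 2 * (Real.exp 2 * Hfun 2 / 2) - 1 = Real.exp 2 * Hfun 3 := by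
    rw [Hfun2_eq, mul_add, he2]; ring
  refine ⟨fun s hs => ?_, fun s hs2 hs3 => ?_, fun s hs1 hs2 => ?_⟩
  · refine (Hfun_le hs).trans ?_
    rcases eq_or_lt_of_le hs with h | h
    · rw [hfun, if_neg (by linarith), if_pos (by linarith), ← h]
      rw [show Real.exp 1 / 3 * 3 = Real.exp 1 by ring]
    · rw [hfun, if_neg (by linarith), if_neg (by linarith)]
      have : Real.exp 1 / 3 * s * (3 / s * Real.exp (-s)) = Real.exp 1 * Real.exp (-s) := by
        field_simp
      rw [this]
  · have hfe : hfun s = Real.exp (-s) := by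
      by_cases h : s ≤ 2
      · have hs2' : s = 2 := le_antisymm h hs2
        rw [hfun, if_pos h, hs2']
      · rw [hfun, if_neg h, if_pos hs3]
    rw [halpha, hfe]
    have h1 : 4 - s ≤ Real.exp (3 - s) := by linarith [Real.add_one_le_exp (3 - s)]
    have h2 : 3 ≤ s * Real.exp (3 - s) := by nlinarith
    have h3 : s * Real.exp (3 - s) * Real.exp (-3) = s * Real.exp (-s) := by
      rw [mul_assoc, ← Real.exp_add]; ring_nf
    have hse : 3 * Real.exp (-3) ≤ s * Real.exp (-s) := by
      rw [← h3]
      exact mul_le_mul_of_nonneg_right h2 (exp_pos _).le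
    have key : Real.exp 1 * Real.exp 2 * Real.exp (-3) = 1 := by
      rw [← Real.exp_add, ← Real.exp_add]; norm_num
    have hA : Real.exp 1 * (Real.exp 2 * Hfun 3) / 3 * (3 * Real.exp (-3)) = Hfun 3 := by
      linear_combination Hfun 3 * key
    calc Hfun 3 = Real.exp 1 * (Real.exp 2 * Hfun 3) / 3 * (3 * Real.exp (-3)) := hA.symm
      _ ≤ Real.exp 1 * (Real.exp 2 * Hfun 3) / 3 * (s * Real.exp (-s)) := by
          have h0 := Hfun3_pos
          apply mul_le_mul_of_nonneg_left hse
          positivity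
      _ = Real.exp 1 * (Real.exp 2 * Hfun 3) / 3 * s * Real.exp (-s) := by ring
  · rw [halpha, hfun, if_pos hs2]
    have heq : Real.exp 2 * Hfun 3 * s * Real.exp (-2) = s * Hfun 3 := by
      linear_combination s * Hfun 3 * he2
    rw [heq]
    nlinarith [Hfun3_pos]
end
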